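/- Let G be a graph, C a longest cycle of G with a fixed orientation, H a component of G − C, and v1, v2 distinct vertices on C each having a neighbor in H, with |N_G(v1; H) ∪ N_G(v2; H)| ≥ 2. If v1v2⁻ is an edge of G, then neither v1⁻v1⁺², nor v1⁻²v1⁺ is an edge of G, and v1⁻v1⁺ is not an edge of G. -/

import Mathlib

open SimpleGraph

variable {V : Type*} [Fintype V] [DecidableEq V]

/-- `p 0, p 1, ..., p (n-1)` is a path of order `n` in `G`. -/
def IsPathOn (G : SimpleGraph V) (n : ℕ) (p : ℕ → V) : Prop :=
  (∀ i j, i < n → j < n → p i = p j → i = j) ∧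
  (∀ i, i + 1 < n → G.Adj (p i) (p (i + 1)))

/-- An induced path of order `n` in `G`. -/
def IsInducedPathOn (G : SimpleGraph V) (n : ℕ) (p : ℕ → V) : Prop :=
  IsPathOn G n p ∧ ∀ i j, i < n → j < n → G.Adj (p i) (p j) → (i + 1 = j ∨ j + 1 = i)

/-- `G` contains no induced path on 5 vertices. -/
def P5Free (G : SimpleGraph V) : Prop := ¬ ∃ p : ℕ → V, IsInducedPathOn G 5 p

/-- `G` contains no induced `K₄` minus an edge. -/
def K4mFree (G : SimpleGraph V) : Prop :=
  ¬ ∃ a b c d : V, a ≠ b ∧ a ≠ c ∧ a ≠ d ∧ b ≠ c ∧ b ≠ d ∧ c ≠ d ∧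
    G.Adj a b ∧ G.Adj a c ∧ G.Adj a d ∧ G.Adj b c ∧ G.Adj b d ∧ ¬ G.Adj c d

/-- `G` contains no induced `W*` (two triangles `abc`, `def` joined by the edge `cd`). -/
def WStarFree (G : SimpleGraph V) : Prop :=
  ¬ ∃ a b c d e f : V, List.Nodup [a, b, c, d, e, f] ∧
    G.Adj a b ∧ G.Adj b c ∧ G.Adj a c ∧ G.Adj d e ∧ G.Adj e f ∧ G.Adj d f ∧ G.Adj c d ∧
    ¬ G.Adj a d ∧ ¬ G.Adj a e ∧ ¬ G.Adj a f ∧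
    ¬ G.Adj b d ∧ ¬ G.Adj b e ∧ ¬ G.Adj b f ∧ ¬ G.Adj c e ∧ ¬ G.Adj c f

/-- `G` contains no induced paw (triangle `abc` with pendant edge `cd`). -/
def Z1Free (G : SimpleGraph V) : Prop :=
  ¬ ∃ a b c d : V, List.Nodup [a, b, c, d] ∧
    G.Adj a b ∧ G.Adj b c ∧ G.Adj a c ∧ G.Adj c d ∧ ¬ G.Adj a d ∧ ¬ G.Adj b d

/-- An (oriented) cycle of length `n` in `G`, as an injective map `ZMod n → V`
with consecutive vertices adjacent. -/
def IsCycleOn (G : SimpleGraph V) (n : ℕ) (c : ZMod n → V) : Prop :=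
  3 ≤ n ∧ Function.Injective c ∧ ∀ i, G.Adj (c i) (c (i + 1))

/-- A longest cycle of `G`. -/
def IsLongestCycle (G : SimpleGraph V) (n : ℕ) (c : ZMod n → V) : Prop :=
  IsCycleOn G n c ∧ ∀ (m : ℕ) (d : ZMod m → V), IsCycleOn G m d → m ≤ n

/-- A dominating cycle: every edge of `G` is incident with a vertex of the cycle. -/
def DominatingCycle (G : SimpleGraph V) (n : ℕ) (c : ZMod n → V) : Prop :=
  IsCycleOn G n c ∧ ∀ u v : V, G.Adj u v → u ∈ Set.range c ∨ v ∈ Set.range c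

/-- `H` is (the vertex set of) a connected component of `G - R`. -/
def IsCompOff (G : SimpleGraph V) (R : Set V) (H : Set V) : Prop :=
  H.Nonempty ∧ Disjoint H R ∧ (G.induce H).Connected ∧
  ∀ u v : V, u ∈ H → v ∉ H → v ∉ R → ¬ G.Adj u v

/-- `μ`: the maximum order of a component of `G - R`. -/
noncomputable def muC (G : SimpleGraph V) (R : Set V) : ℕ :=
  sSup {k | ∃ H : Set V, IsCompOff G R H ∧ H.ncard = k}

/-- `ω`: the number of components of `G - R` of maximum order. -/
noncomputable def omegaC (G : SimpleGraph V) (R : Set V) : ℕ :=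
  {H : Set V | IsCompOff G R H ∧ H.ncard = muC G R}.ncard

/-- `G` is 2-connected: at least 3 vertices, connected, and removing any
vertex leaves it connected. -/
def TwoConnected (G : SimpleGraph V) : Prop :=
  3 ≤ Fintype.card V ∧ G.Connected ∧
  ∀ v : V, (G.induce ({v}ᶜ : Set V)).Connected

/-- The set of indices of `ZMod n` encountered going from `s` to `t` in the
positive direction (including both `s` and `t`). -/
def seg (n : ℕ) (s t : ZMod n) : Set (ZMod n) :=
  {x | ∃ k : ℕ, x = s + (k : ZMod n) ∧ ∀ m : ℕ, m < k → s + (m : ZMod n) ≠ t}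

/-- `G` is complete multipartite: the vertices partition into classes of an
equivalence relation which are independent, with all edges between classes. -/
def CompleteMultipartite (G : SimpleGraph V) : Prop :=
  ∃ r : V → V → Prop, Equivalence r ∧ ∀ u v : V, u ≠ v → (G.Adj u v ↔ ¬ r u v)

/-- A `C`-path (for `R = V(C)`): a path of order at least 2 whose ends lie in
`R` and whose internal vertices avoid `R`. -/
def IsCPath (G : SimpleGraph V) (R : Set V) (m : ℕ) (p : ℕ → V) : Prop :=
  2 ≤ m ∧ IsPathOn G m p ∧ p 0 ∈ R ∧ p (m - 1) ∈ R ∧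
  ∀ i, 0 < i → i < m - 1 → p i ∉ R

section AuxStmt3
set_option linter.unusedSectionVars false

lemma aux_range'_getLast? (a l : ℕ) (h : 1 ≤ l) :
    (List.range' a l).getLast? = some (a + l - 1) := by
  have hne : List.range' a l ≠ [] := by simp; omega
  rw [List.getLast?_eq_getLast hne, List.getLast_eq_getElem, List.getElem_range']
  simp [List.length_range']
  omega

lemma aux_range'_head? (a l : ℕ) (h : 1 ≤ l) :
    (List.range' a l).head? = some a := by
  have hne : List.range' a l ≠ [] := by simp; omega
  rw [List.head?_eq_head hne, List.head_eq_getElem, List.getElem_range']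
  simp

lemma aux_exists_path_list (G : SimpleGraph V) (H : Set V) (hconn : (G.induce H).Connected)
    (a b : V) (ha : a ∈ H) (hb : b ∈ H) :
    ∃ P : List V, P ≠ [] ∧ P.Nodup ∧ (∀ x ∈ P, x ∈ H) ∧ List.Chain' G.Adj P ∧
      P.head? = some a ∧ P.getLast? = some b := by
  obtain ⟨w⟩ := hconn.preconnected ⟨a, ha⟩ ⟨b, hb⟩
  set p := w.toPath
  have hsne : p.1.support ≠ [] := SimpleGraph.Walk.support_ne_nil _
  refine ⟨p.1.support.map Subtype.val, fun h => hsne (List.map_eq_nil_iff.mp h), ?_, ?_, ?_, ?_, ?_⟩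
  · exact (p.2.support_nodup).map Subtype.val_injective
  · intro x hx
    simp only [List.mem_map] at hx
    obtain ⟨y, _, rfl⟩ := hx
    exact y.2
  · unfold List.Chain'; rw [List.isChain_map]
    exact (SimpleGraph.Walk.isChain_adj_support p.1).imp (fun u v h => h)
  · rw [List.head?_eq_head (fun h => hsne (List.map_eq_nil_iff.mp h)), List.head_map,
      SimpleGraph.Walk.head_support]
  · rw [List.getLast?_eq_getLast (fun h => hsne (List.map_eq_nil_iff.mp h)), List.getLast_map,
      SimpleGraph.Walk.getLast_support]

lemma aux_longest_cycle_bound (G : SimpleGraph V) {n : ℕ} {c : ZMod n → V}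
    (hc : IsLongestCycle G n c) (L : List V) (h3 : 3 ≤ L.length) (hnd : L.Nodup)
    (hch : List.Chain' G.Adj L) (hne : L ≠ [])
    (hcl : G.Adj (L.getLast hne) (L.head hne)) : L.length ≤ n := by
  haveI : NeZero L.length := ⟨by omega⟩
  refine hc.2 L.length (fun i => L.get ⟨i.val, ZMod.val_lt i⟩) ⟨h3, ?_, ?_⟩
  · intro i j hij
    have := (hnd.get_inj_iff).mp hij
    have hv : i.val = j.val := congrArg Fin.val this
    exact ZMod.val_injective _ hv
  · intro i
    haveI : Fact (1 < L.length) := ⟨by omega⟩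
    have hv : (i + 1).val = (i.val + 1) % L.length := by
      rw [ZMod.val_add, ZMod.val_one]
    by_cases hlt : i.val + 1 < L.length
    · have : (i + 1).val = i.val + 1 := by rw [hv, Nat.mod_eq_of_lt hlt]
      have hadj := List.isChain_iff_getElem.mp hch i.val (by omega)
      simp only [this]
      convert hadj using 2 <;> rfl
    · have hiv : i.val = L.length - 1 := by have := ZMod.val_lt i; omega
      have hlen : L.length - 1 + 1 = L.length := by omega
      have : (i + 1).val = 0 := by rw [hv, hiv, hlen, Nat.mod_self]
      simp only [this]
      have h1 : L.get ⟨i.val, ZMod.val_lt i⟩ = L.getLast hne := by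
        rw [List.getLast_eq_getElem]; simp [hiv, List.get_eq_getElem]
      have h2 : L.get ⟨0, by omega⟩ = L.head hne := by
        rw [List.head_eq_getElem]; simp [List.get_eq_getElem]
      rw [h1, h2]; exact hcl

lemma aux_arc_chain (G : SimpleGraph V) {n : ℕ} {c : ZMod n → V}
    (hadj : ∀ i, G.Adj (c i) (c (i + 1))) (i1 : ZMod n) (a l : ℕ) :
    List.Chain' (fun t t' : ℕ => G.Adj (c (i1 + t)) (c (i1 + t'))) (List.range' a l) := by
  unfold List.Chain'; rw [List.isChain_iff_getElem]
  intro i hi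
  have hlen : (List.range' a l).length = l := List.length_range' ..
  have h1 : (List.range' a l).get ⟨i, by omega⟩ = a + i := by
    simp [List.get_eq_getElem, List.getElem_range']
  have h2 : (List.range' a l).get ⟨i + 1, by omega⟩ = a + (i + 1) := by
    simp [List.get_eq_getElem, List.getElem_range']
  simp only [List.get_eq_getElem] at h1 h2
  rw [h1, h2]
  have hcast : (i1 + ((a + (i+1) : ℕ) : ZMod n)) = (i1 + ((a + i : ℕ) : ZMod n)) + 1 := by
    push_cast; ring
  rw [hcast]
  exact hadj _

lemma aux_arc_chain_rev (G : SimpleGraph V) {n : ℕ} {c : ZMod n → V}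
    (hadj : ∀ i, G.Adj (c i) (c (i + 1))) (i1 : ZMod n) (a l : ℕ) :
    List.Chain' (fun t t' : ℕ => G.Adj (c (i1 + t)) (c (i1 + t'))) (List.range' a l).reverse := by
  unfold List.Chain'; rw [List.isChain_reverse]
  exact (show List.IsChain _ _ from aux_arc_chain G hadj i1 a l).imp (fun u v h => h.symm)

lemma aux_master (G : SimpleGraph V) {n : ℕ} {c : ZMod n → V}
    (hc : IsLongestCycle G n c) {H : Set V} (hdisj : Disjoint H (Set.range c))
    (i1 : ZMod n)
    (P : List V) (hPne : P ≠ []) (hPnd : P.Nodup) (hPH : ∀ x ∈ P, x ∈ H)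
    (hPch : List.Chain' G.Adj P)
    (O : List ℕ) (hOne : O ≠ []) (hOnd : O.Nodup) (hOlt : ∀ t ∈ O, 0 < t ∧ t < n)
    (hOch : List.Chain' (fun t t' : ℕ => G.Adj (c (i1 + t)) (c (i1 + t'))) O)
    (e1 : G.Adj (c i1) (P.head hPne))
    (e2 : G.Adj (P.getLast hPne) (c (i1 + (O.head hOne : ℕ))))
    (e3 : G.Adj (c (i1 + (O.getLast hOne : ℕ))) (c i1)) :
    1 + P.length + O.length ≤ n := by
  have hn3 : 3 ≤ n := hc.1.1
  have cinj : Function.Injective c := hc.1.2.1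
  have hPnotc : ∀ x ∈ P, x ∉ Set.range c := by
    intro x hx hr
    exact Set.disjoint_left.mp hdisj (hPH x hx) hr
  have hcast_ne : ∀ t : ℕ, 0 < t → t < n → (i1 + (t : ZMod n)) ≠ i1 := by
    intro t ht htn h
    have h0 : (t : ZMod n) = 0 := by
      have := h
      nth_rewrite 2 [← add_zero i1] at this
      exact add_left_cancel this
    have hdvd := (ZMod.natCast_eq_zero_iff t n).mp h0
    have := Nat.le_of_dvd ht hdvd
    omega
  have hoff_inj : ∀ t ∈ O, ∀ t' ∈ O, c (i1 + (t : ZMod n)) = c (i1 + (t' : ZMod n)) → t = t' := by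
    intro t ht t' ht' h
    have h2 := add_left_cancel (cinj h)
    have := (hOlt t ht).2
    have := (hOlt t' ht').2
    calc t = ((t : ZMod n)).val := (ZMod.val_cast_of_lt (by omega)).symm
    _ = ((t' : ZMod n)).val := by rw [h2]
    _ = t' := ZMod.val_cast_of_lt (by omega)
  set Om : List V := O.map (fun t : ℕ => c (i1 + (t : ZMod n))) with hOm
  have hOmne : Om ≠ [] := by simp [hOm, hOne]
  set L : List V := c i1 :: (P ++ Om) with hL
  have hLne : L ≠ [] := by simp [hL]
  have hlen : L.length = 1 + P.length + O.length := by simp [hL, hOm]; omega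
  have hPlen : 1 ≤ P.length := List.length_pos_iff.mpr hPne
  have hOlen : 1 ≤ O.length := List.length_pos_iff.mpr hOne
  have hnd : L.Nodup := by
    rw [hL, List.nodup_cons, List.nodup_append]
    refine ⟨?_, hPnd, ?_, ?_⟩
    · intro hmem
      rcases List.mem_append.mp hmem with hp | hm
      · exact hPnotc _ hp ⟨i1, rfl⟩
      · obtain ⟨t, htO, hteq⟩ := List.mem_map.mp hm
        obtain ⟨ht0, htn⟩ := hOlt t htO
        exact hcast_ne t ht0 htn (cinj hteq)
    · refine List.Nodup.map_on ?_ hOnd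
      intro t ht t' ht' h
      exact hoff_inj t ht t' ht' h
    · intro x hxP y hxOm
      obtain ⟨t, _, rfl⟩ := List.mem_map.mp hxOm
      intro hxy
      exact hPnotc _ hxP ⟨_, hxy.symm⟩
  have hch : List.Chain' G.Adj L := by
    rw [hL]; unfold List.Chain'; rw [List.isChain_cons]
    constructor
    · intro y hy
      rw [List.head?_append_of_ne_nil _ hPne] at hy
      rw [List.head?_eq_head hPne] at hy
      obtain rfl := Option.some_injective _ hy.symm
      exact e1
    · rw [List.isChain_append]
      refine ⟨hPch, ?_, ?_⟩
      · rw [hOm, List.isChain_map]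
        exact hOch
      · intro x hx y hy
        rw [List.getLast?_eq_getLast hPne] at hx
        obtain rfl := Option.some_injective _ hx.symm
        rw [hOm, List.head?_map, List.head?_eq_head hOne] at hy
        simp only [Option.map_some] at hy
        obtain rfl := Option.some_injective _ hy.symm
        exact e2
  have hOq : O.getLast? = some (O.getLast hOne) := List.getLast?_eq_getLast hOne
  have hq : L.getLast? = some (c (i1 + (O.getLast hOne : ℕ))) := by
    show (c i1 :: (P ++ Om)).getLast? = _
    rw [← List.singleton_append, List.getLast?_append_of_ne_nil _ (by simp [hPne]),
      List.getLast?_append_of_ne_nil _ hOmne, hOm, List.getLast?_map, hOq]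
    rfl
  have hlast : L.getLast hLne = c (i1 + (O.getLast hOne : ℕ)) := by
    have := List.getLast?_eq_getLast hLne
    rw [this] at hq
    exact Option.some_injective _ hq
  have hhead : L.head hLne = c i1 := rfl
  have hcl : G.Adj (L.getLast hLne) (L.head hLne) := by rw [hlast, hhead]; exact e3
  have hb := aux_longest_cycle_bound G hc L (by omega) hnd hch hLne hcl
  omega

lemma aux_combine (G : SimpleGraph V) {n : ℕ} {c : ZMod n → V}
    (hc : IsLongestCycle G n c) {H : Set V} (hdisj : Disjoint H (Set.range c))
    (i1 : ZMod n)
    (P : List V) (hPne : P ≠ []) (hPnd : P.Nodup) (hPH : ∀ x ∈ P, x ∈ H)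
    (hPch : List.Chain' G.Adj P)
    (s l₁ a₂ : ℕ) (hs3 : 3 ≤ s) (hl₁ : 1 ≤ l₁) (hsl : s + l₁ ≤ n) (ha₂ : 1 ≤ a₂)
    (ha₂s : a₂ + 1 ≤ s)
    (e1 : G.Adj (c i1) (P.head hPne))
    (e2 : G.Adj (P.getLast hPne) (c (i1 + ((s : ℕ) : ZMod n))))
    (ejoin : G.Adj (c (i1 + ((s + l₁ - 1 : ℕ) : ZMod n))) (c (i1 + ((a₂ : ℕ) : ZMod n))))
    (eclose : G.Adj (c (i1 + ((s - 1 : ℕ) : ZMod n))) (c i1)) :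
    1 + P.length + (l₁ + (s - a₂)) ≤ n := by
  have hadj := hc.1.2.2
  set O : List ℕ := List.range' s l₁ ++ List.range' a₂ (s - a₂) with hO
  have h1ne : List.range' s l₁ ≠ [] := by simp; omega
  have h2ne : List.range' a₂ (s - a₂) ≠ [] := by simp; omega
  have hOne : O ≠ [] := by simp [hO, h1ne]
  have hOnd : O.Nodup := by
    rw [hO, List.nodup_append]
    refine ⟨List.nodup_range', List.nodup_range', ?_⟩
    intro t ht1 t' ht2
    rw [List.mem_range'_1] at ht1 ht2
    omega
  have hOlt : ∀ t ∈ O, 0 < t ∧ t < n := by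
    intro t ht
    rw [hO, List.mem_append, List.mem_range'_1, List.mem_range'_1] at ht
    omega
  have hOch : List.Chain' (fun t t' : ℕ => G.Adj (c (i1 + t)) (c (i1 + t'))) O := by
    rw [hO]; unfold List.Chain'; rw [List.isChain_append]
    refine ⟨aux_arc_chain G hadj i1 _ _, aux_arc_chain G hadj i1 _ _, ?_⟩
    intro x hx y hy
    rw [aux_range'_getLast? _ _ (by omega)] at hx
    obtain rfl := Option.some_injective _ hx.symm
    rw [aux_range'_head? _ _ (by omega)] at hy
    obtain rfl := Option.some_injective _ hy.symm
    exact ejoin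
  have hOhead : O.head hOne = s := by
    have h2 : O.head? = some s := by
      rw [hO, List.head?_append_of_ne_nil _ h1ne, aux_range'_head? _ _ (by omega)]
    exact (Option.some_injective _ (h2.symm.trans (List.head?_eq_head hOne))).symm
  have hOlast : O.getLast hOne = s - 1 := by
    have h2 : O.getLast? = some (a₂ + (s - a₂) - 1) := by
      rw [hO, List.getLast?_append_of_ne_nil _ h2ne, aux_range'_getLast? _ _ (by omega)]
    have := Option.some_injective _ (h2.symm.trans (List.getLast?_eq_getLast hOne))
    omega
  have hb := aux_master G hc hdisj i1 P hPne hPnd hPH hPch O hOne hOnd hOlt hOch e1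
    (by rw [hOhead]; exact e2) (by rw [hOlast]; exact eclose)
  have hOlen : O.length = l₁ + (s - a₂) := by simp [hO, List.length_range']
  omega

end AuxStmt3

theorem stmt_3 (G : SimpleGraph V) (n : ℕ) (c : ZMod n → V)
    (hc : IsLongestCycle G n c)
    (H : Set V) (hH : IsCompOff G (Set.range c) H)
    (i1 i2 : ZMod n) (hne : c i1 ≠ c i2)
    (h1 : ∃ x ∈ H, G.Adj (c i1) x) (h2 : ∃ x ∈ H, G.Adj (c i2) x)
    (hcard : 2 ≤ ({x | x ∈ H ∧ G.Adj (c i1) x} ∪ {x | x ∈ H ∧ G.Adj (c i2) x}).ncard)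
    (he : G.Adj (c i1) (c (i2 - 1))) :
    ¬ G.Adj (c (i1 - 1)) (c (i1 + 2)) ∧
    ¬ G.Adj (c (i1 - 2)) (c (i1 + 1)) ∧
    ¬ G.Adj (c (i1 - 1)) (c (i1 + 1)) := by
  
  have hn3 : 3 ≤ n := hc.1.1
  haveI : NeZero n := ⟨by omega⟩
  have hadj := hc.1.2.2
  have hdisj : Disjoint H (Set.range c) := hH.2.1
  obtain ⟨x1, hx1H, hx1a⟩ := h1
  obtain ⟨x2, hx2H, hx2a⟩ := h2
  have hex : ∃ a b : V, (a ∈ H ∧ G.Adj (c i1) a) ∧ (b ∈ H ∧ G.Adj (c i2) b) ∧ a ≠ b := by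
    by_contra hcon
    push_neg at hcon
    have hsub : ({x | x ∈ H ∧ G.Adj (c i1) x} ∪ {x | x ∈ H ∧ G.Adj (c i2) x}) ⊆ {x1} := by
      intro z hz
      rcases hz with hz | hz
      · have h12 := hcon x1 x2 ⟨hx1H, hx1a⟩ ⟨hx2H, hx2a⟩
        have hz2 := hcon z x2 ⟨hz.1, hz.2⟩ ⟨hx2H, hx2a⟩
        simp only [Set.mem_singleton_iff]
        rw [hz2, ← h12]
      · have := hcon x1 z ⟨hx1H, hx1a⟩ ⟨hz.1, hz.2⟩
        simp only [Set.mem_singleton_iff]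
        rw [← this]
    have hle := Set.ncard_le_ncard hsub (Set.finite_singleton x1)
    rw [Set.ncard_singleton] at hle
    omega
  obtain ⟨a, b, ⟨haH, haA⟩, ⟨hbH, hbA⟩, hab⟩ := hex
  obtain ⟨P, hPne, hPnd, hPH, hPch, hPh, hPl⟩ := aux_exists_path_list G H hH.2.2.1 a b haH hbH
  have hheadP : P.head hPne = a :=
    (Option.some_injective _ (hPh.symm.trans (List.head?_eq_head hPne))).symm
  have hlastP : P.getLast hPne = b :=
    (Option.some_injective _ (hPl.symm.trans (List.getLast?_eq_getLast hPne))).symm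
  have hPlen2 : 2 ≤ P.length := by
    by_contra hlt
    have h1l : P.length = 1 := by
      have := List.length_pos_iff.mpr hPne; omega
    obtain ⟨x, rfl⟩ := List.length_eq_one_iff.mp h1l
    apply hab
    rw [← hheadP, ← hlastP]; rfl
  set s : ℕ := (i2 - i1).val with hs
  have hslt : s < n := ZMod.val_lt _
  have hi2 : i2 = i1 + ((s : ℕ) : ZMod n) := by
    rw [hs, ZMod.natCast_val, ZMod.cast_id]
    ring
  have hs0 : s ≠ 0 := by
    intro h
    rw [h] at hi2
    simp only [Nat.cast_zero, add_zero] at hi2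
    exact hne (by rw [hi2])
  have hs1 : s ≠ 1 := by
    intro h
    rw [h] at hi2
    have hloop : i2 - 1 = i1 := by rw [hi2]; push_cast; ring
    rw [hloop] at he
    exact G.irrefl he
  have hnm1 : i1 + ((n - 1 : ℕ) : ZMod n) = i1 - 1 := by
    rw [Nat.cast_sub (by omega : 1 ≤ n), ZMod.natCast_self]
    push_cast; ring
  have hnm2 : i1 + ((n - 2 : ℕ) : ZMod n) = i1 - 2 := by
    rw [Nat.cast_sub (by omega : 2 ≤ n), ZMod.natCast_self]
    push_cast; ring
  have hsm1 : i1 + ((s - 1 : ℕ) : ZMod n) = i2 - 1 := by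
    rw [Nat.cast_sub (by omega : 1 ≤ s), hi2]
    ring
  have e1 : G.Adj (c i1) (P.head hPne) := by rw [hheadP]; exact haA
  have e2 : G.Adj (P.getLast hPne) (c (i1 + ((s : ℕ) : ZMod n))) := by
    rw [hlastP, ← hi2]; exact hbA.symm
  have eclose : G.Adj (c (i1 + ((s - 1 : ℕ) : ZMod n))) (c i1) := by
    rw [hsm1]; exact he.symm
  by_cases hs2 : s = 2
  · exfalso
    have hOne : List.range' 2 (n - 2) ≠ [] := by simp; omega
    have hOhead : (List.range' 2 (n - 2)).head hOne = 2 :=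
      (Option.some_injective _ ((aux_range'_head? 2 (n - 2) (by omega)).symm.trans
        (List.head?_eq_head hOne))).symm
    have hOlast : (List.range' 2 (n - 2)).getLast hOne = n - 1 := by
      have := Option.some_injective _ ((aux_range'_getLast? 2 (n - 2) (by omega)).symm.trans
        (List.getLast?_eq_getLast hOne))
      omega
    have hOlt : ∀ t ∈ List.range' 2 (n - 2), 0 < t ∧ t < n := by
      intro t ht; rw [List.mem_range'_1] at ht; omega
    have e2' : G.Adj (P.getLast hPne)
        (c (i1 + (((List.range' 2 (n - 2)).head hOne : ℕ) : ZMod n))) := by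
      rw [hOhead]
      rw [hs2] at e2
      exact e2
    have e3' : G.Adj (c (i1 + (((List.range' 2 (n - 2)).getLast hOne : ℕ) : ZMod n))) (c i1) := by
      rw [hOlast, hnm1]
      have h := hadj (i1 - 1)
      rwa [sub_add_cancel] at h
    have hb2 := aux_master G hc hdisj i1 P hPne hPnd hPH hPch (List.range' 2 (n - 2)) hOne
      (List.nodup_range') hOlt (aux_arc_chain G hadj i1 _ _) e1 e2' e3'
    rw [List.length_range'] at hb2
    omega
  by_cases hsn1 : s = n - 1
  · exfalso
    have hOne : (List.range' 1 (n - 1)).reverse ≠ [] := by simp; omega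
    have hOnd : (List.range' 1 (n - 1)).reverse.Nodup := by
      rw [List.nodup_reverse]; exact List.nodup_range'
    have hOlt : ∀ t ∈ (List.range' 1 (n - 1)).reverse, 0 < t ∧ t < n := by
      intro t ht; rw [List.mem_reverse, List.mem_range'_1] at ht; omega
    have hOhead : (List.range' 1 (n - 1)).reverse.head hOne = n - 1 := by
      have h2 : (List.range' 1 (n - 1)).reverse.head? = some (1 + (n - 1) - 1) := by
        rw [List.head?_reverse, aux_range'_getLast? _ _ (by omega)]
      have := Option.some_injective _ (h2.symm.trans (List.head?_eq_head hOne))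
      omega
    have hOlast : (List.range' 1 (n - 1)).reverse.getLast hOne = 1 := by
      have h2 : (List.range' 1 (n - 1)).reverse.getLast? = some 1 := by
        rw [List.getLast?_reverse, aux_range'_head? _ _ (by omega)]
      have := Option.some_injective _ (h2.symm.trans (List.getLast?_eq_getLast hOne))
      omega
    have e2' : G.Adj (P.getLast hPne)
        (c (i1 + ((((List.range' 1 (n - 1)).reverse.head hOne : ℕ)) : ZMod n))) := by
      rw [hOhead, ← hsn1]
      exact e2
    have e3' : G.Adj (c (i1 + ((((List.range' 1 (n - 1)).reverse.getLast hOne : ℕ)) : ZMod n)))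
        (c i1) := by
      rw [hOlast]
      push_cast
      exact (hadj i1).symm
    have hb2 := aux_master G hc hdisj i1 P hPne hPnd hPH hPch ((List.range' 1 (n - 1)).reverse)
      hOne hOnd hOlt (aux_arc_chain_rev G hadj i1 _ _) e1 e2' e3'
    rw [List.length_reverse, List.length_range'] at hb2
    omega
  have hs3 : 3 ≤ s := by omega
  have hsn2 : s ≤ n - 2 := by omega
  refine ⟨?_, ?_, ?_⟩
  · intro hchord
    have ejoin : G.Adj (c (i1 + ((s + (n - s) - 1 : ℕ) : ZMod n)))
        (c (i1 + ((2 : ℕ) : ZMod n))) := by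
      have hh : (s + (n - s) - 1 : ℕ) = n - 1 := by omega
      have h2c : i1 + ((2 : ℕ) : ZMod n) = i1 + 2 := by push_cast; ring
      rw [hh, hnm1, h2c]
      exact hchord
    have hb2 := aux_combine G hc hdisj i1 P hPne hPnd hPH hPch s (n - s) 2 hs3 (by omega)
      (by omega) (by omega) (by omega) e1 e2 ejoin eclose
    omega
  · intro hchord
    have ejoin : G.Adj (c (i1 + ((s + (n - 1 - s) - 1 : ℕ) : ZMod n)))
        (c (i1 + ((1 : ℕ) : ZMod n))) := by
      have hh : (s + (n - 1 - s) - 1 : ℕ) = n - 2 := by omega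
      have h2c : i1 + ((1 : ℕ) : ZMod n) = i1 + 1 := by push_cast; ring
      rw [hh, hnm2, h2c]
      exact hchord
    have hb2 := aux_combine G hc hdisj i1 P hPne hPnd hPH hPch s (n - 1 - s) 1 hs3 (by omega)
      (by omega) (by omega) (by omega) e1 e2 ejoin eclose
    omega
  · intro hchord
    have ejoin : G.Adj (c (i1 + ((s + (n - s) - 1 : ℕ) : ZMod n)))
        (c (i1 + ((1 : ℕ) : ZMod n))) := by
      have hh : (s + (n - s) - 1 : ℕ) = n - 1 := by omega
      have h2c : i1 + ((1 : ℕ) : ZMod n) = i1 + 1 := by push_cast; ring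
      rw [hh, hnm1, h2c]
      exact hchord
    have hb2 := aux_combine G hc hdisj i1 P hPne hPnd hPH hPch s (n - s) 1 hs3 (by omega)
      (by omega) (by omega) (by omega) e1 e2 ejoin eclose
    omega
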